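/- arXiv:1801.07155 — 4 statements merged into one kernel-verified Lean document; each statement's English description precedes it below -/
import Mathlib

section
/- (Replacement difference) Let μ_1 and μ_2 each be either a nonempty sequence of positive integers or the sequence 0,0. Then N[μ_1,1,1,μ_2] − N[μ_1,2,μ_2] = N[μ_1^-]·N[^-μ_2], where μ_1^- is μ_1 with its last entry removed and ^-μ_2 is μ_2 with its first entry removed (and N of the empty sequence is 1). -/
/-- head-recursion continuant -/
def contAux : List ℕ → ℕ
  | [] => 1
  | [a] => a
  | a :: b :: l => a * contAux (b :: l) + contAux l

/-- continuant `N[a₁,...,aₙ]`, satisfying `N[] = 1`, `N[a] = a`,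
`N[a₁,...,aₙ] = aₙ·N[a₁,...,aₙ₋₁] + N[a₁,...,aₙ₋₂]`. -/
def contN (l : List ℕ) : ℕ := contAux l.reverse


/-- μ is either a nonempty sequence of positive integers or the sequence 0,0 -/
def OkSeq (μ : List ℕ) : Prop := (μ ≠ [] ∧ ∀ x ∈ μ, 0 < x) ∨ μ = [0, 0]

lemma contAux_cons (a : ℕ) (B : List ℕ) (hB : B ≠ []) :
    contAux (a :: B) = a * contAux B + contAux B.tail := by
  cases B with
  | nil => exact absurd rfl hB
  | cons c B' => rfl

lemma contAux_append (B : List ℕ) (hB : B ≠ []) :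
    ∀ A : List ℕ, A ≠ [] →
      contAux (A ++ B) = contAux A * contAux B + contAux A.dropLast * contAux B.tail := by
  intro A
  induction A using contAux.induct with
  | case1 => intro h; exact absurd rfl h
  | case2 a =>
    intro _
    simp only [List.cons_append, List.nil_append, contAux_cons a B hB]
    simp [contAux]
  | case3 a b l ih1 ih2 =>
    intro _
    cases l with
    | nil =>
      show contAux (a :: b :: B) = _
      rw [contAux_cons a (b :: B) (by simp), show (b :: B).tail = B from rfl,
        contAux_cons b B hB]
      simp [contAux]
      ring
    | cons c l' =>
      show contAux (a :: ((b :: c :: l') ++ B)) = _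
      rw [contAux_cons a ((b :: c :: l') ++ B) (by simp),
        show ((b :: c :: l') ++ B).tail = (c :: l') ++ B from rfl,
        ih1 (by simp), ih2 (by simp)]
      have hd1 : (a :: b :: c :: l').dropLast = a :: (b :: c :: l').dropLast := rfl
      have hd2 : ((b :: c :: l').dropLast).tail = (c :: l').dropLast := rfl
      rw [hd1, contAux_cons a ((b :: c :: l').dropLast) (by simp), hd2,
        show contAux (a :: b :: c :: l') = a * contAux (b :: c :: l') + contAux (c :: l') from rfl]
      ring

lemma contN_append (A B : List ℕ) (hA : A ≠ []) (hB : B ≠ []) :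
    contN (A ++ B) = contN A * contN B + contN A.dropLast * contN B.tail := by
  unfold contN
  rw [List.reverse_append,
    contAux_append A.reverse (by simpa) B.reverse (by simpa),
    List.tail_reverse]
  have : B.reverse.dropLast = B.tail.reverse := by
    have h := List.tail_reverse (l := B.reverse)
    rw [List.reverse_reverse] at h
    rw [h, List.reverse_reverse]
  rw [this]
  ring

theorem stmt_10 (μ₁ μ₂ : List ℕ) (h₁ : OkSeq μ₁) (h₂ : OkSeq μ₂) :
    contN (μ₁ ++ [1, 1] ++ μ₂) =
      contN (μ₁ ++ [2] ++ μ₂) + contN μ₁.dropLast * contN μ₂.tail := by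
  have h1 : μ₁ ≠ [] := by rcases h₁ with ⟨h, _⟩ | h <;> simp_all
  have h2 : μ₂ ≠ [] := by rcases h₂ with ⟨h, _⟩ | h <;> simp_all
  rw [List.append_assoc, List.append_assoc,
    contN_append μ₁ ([1, 1] ++ μ₂) h1 (by simp),
    contN_append μ₁ ([2] ++ μ₂) h1 (by simp),
    show ([1, 1] ++ μ₂ : List ℕ) = 1 :: 1 :: μ₂ from rfl,
    show ([2] ++ μ₂ : List ℕ) = 2 :: μ₂ from rfl,
    show (1 :: 1 :: μ₂).tail = 1 :: μ₂ from rfl,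
    show (2 :: μ₂ : List ℕ).tail = μ₂ from rfl,
    show (1 :: 1 :: μ₂ : List ℕ) = [1, 1] ++ μ₂ from rfl,
    show (1 :: μ₂ : List ℕ) = [1] ++ μ₂ from rfl,
    show (2 :: μ₂ : List ℕ) = [2] ++ μ₂ from rfl,
    contN_append [1, 1] μ₂ (by simp) h2,
    contN_append [1] μ₂ (by simp) h2,
    contN_append [2] μ₂ (by simp) h2]
  simp [contN, contAux]
  ring
end

section
/- The exact difference when replacing a single 1,1 by 2 at the j-th replacement position in a mixed sequence: with δ_j = μ_1,2,μ_2,2,...,μ_j and ε_j = μ_{j+1},1,1,μ_{j+2},1,1,...,μ_k, one has N[μ_1,2,μ_2,2,...,μ_k,2] − N[μ_1,1,1,μ_2,1,1,...,μ_k] = N[μ_1,2,μ_2,2,...,μ_k,1] − Σ_{j=1}^{k-1} N[δ_j^-]·N[^-ε_j], where δ_j^- removes the last entry of δ_j and ^-ε_j removes the first entry of ε_j. -/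
theorem contAux_append_s15 : ∀ (x y : List ℕ), x ≠ [] → y ≠ [] →
    contAux (x ++ y) = contAux x * contAux y + contAux x.dropLast * contAux y.tail
  | [a], y, _, hy => by
      obtain ⟨b, t, rfl⟩ := List.exists_cons_of_ne_nil hy
      cases t with
      | nil => simp [contAux]
      | cons c u => simp [contAux]; try ring
  | [a, b], y, _, hy => by
      obtain ⟨c, t, rfl⟩ := List.exists_cons_of_ne_nil hy
      cases t with
      | nil => simp [contAux]; try ring
      | cons d u => simp [contAux]; try ring
  | a :: b :: c :: x, y, _, hy => by
      have h1 := contAux_append_s15 (b :: c :: x) y (by simp) hy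
      have h2 := contAux_append_s15 (c :: x) y (by simp) hy
      simp only [List.cons_append, List.dropLast_cons₂] at *
      rw [show contAux (a :: b :: c :: (x ++ y)) =
        a * contAux (b :: c :: (x ++ y)) + contAux (c :: (x ++ y)) from rfl]
      rw [h1, h2]
      rw [show contAux (a :: b :: c :: x) = a * contAux (b :: c :: x) + contAux (c :: x) from rfl]
      rw [show contAux (a :: b :: (c :: x).dropLast) =
        a * contAux (b :: (c :: x).dropLast) + contAux ((c :: x).dropLast) from rfl]
      ring

lemma dropLast_rev (l : List ℕ) : l.reverse.dropLast = l.tail.reverse := by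
  rw [← List.reverse_reverse l.reverse.dropLast, ← List.tail_reverse,
    List.reverse_reverse]

theorem contN_split (l m : List ℕ) (hl : l ≠ []) (hm : m ≠ []) :
    contN (l ++ m) = contN l * contN m + contN l.dropLast * contN m.tail := by
  unfold contN
  rw [List.reverse_append, contAux_append_s15 _ _ (by simpa) (by simpa),
    List.tail_reverse, dropLast_rev]
  ring

theorem contN_step (l m : List ℕ) (hl : l ≠ []) (hm : m ≠ []) :
    contN (l ++ [1, 1] ++ m) = contN (l ++ [2] ++ m) + contN l.dropLast * contN m.tail := by
  have h1 : contN ([1, 1] ++ m) = 2 * contN m + contN m.tail := by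
    rw [contN_split [1, 1] m (by simp) hm]
    simp [contN, contAux]
  have h2 : contN ([2] ++ m) = 2 * contN m + contN m.tail := by
    rw [contN_split [2] m (by simp) hm]
    simp [contN, contAux]
  have h3 : contN ([1] ++ m) = contN m + contN m.tail := by
    rw [contN_split [1] m (by simp) hm]
    simp [contN, contAux]
  rw [List.append_assoc l [1,1] m, List.append_assoc l [2] m,
    contN_split l ([1,1] ++ m) hl (by simp), contN_split l ([2] ++ m) hl (by simp)]
  have t1 : ([1,1] ++ m).tail = [1] ++ m := rfl
  have t2 : ([2] ++ m).tail = m := rfl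
  rw [t1, t2, h1, h2, h3]
  ring

lemma flatten_intersperse (s b : List ℕ) (bs : List (List ℕ)) :
    (List.intersperse s (b :: bs)).flatten = b ++ (bs.map (fun μ => s ++ μ)).flatten := by
  induction bs generalizing b with
  | nil => simp
  | cons c cs ih =>
    rw [List.intersperse_cons₂]
    simp only [List.flatten_cons, List.map_cons]
    rw [ih c]
    simp

theorem main_aux : ∀ (μs : List (List ℕ)), (∀ μ ∈ μs, μ ≠ []) → ∀ (p : List ℕ), p ≠ [] →
    contN (p ++ (μs.map (fun μ => [2] ++ μ)).flatten) +
      ∑ j ∈ Finset.range μs.length,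
        contN (p ++ ((μs.take j).map (fun μ => [2] ++ μ)).flatten).dropLast *
          contN ((List.intersperse [1, 1] (μs.drop j)).flatten).tail =
    contN (p ++ (μs.map (fun μ => [1, 1] ++ μ)).flatten) := by
  intro μs
  induction μs with
  | nil => simp
  | cons μ rest ih =>
    intro hne p hp
    have hμ : μ ≠ [] := hne μ (by simp)
    have hrest : ∀ ν ∈ rest, ν ≠ [] := fun ν hν => hne ν (by simp [hν])
    have key := ih hrest (p ++ ([2] ++ μ)) (by simp [hp])
    rw [List.length_cons, Finset.sum_range_succ']
    have reidx : ∀ j : ℕ,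
        contN (p ++ (((μ :: rest).take (j + 1)).map (fun μ => [2] ++ μ)).flatten).dropLast *
          contN ((List.intersperse [1, 1] ((μ :: rest).drop (j + 1))).flatten).tail
        = contN ((p ++ ([2] ++ μ)) ++ ((rest.take j).map (fun μ => [2] ++ μ)).flatten).dropLast *
          contN ((List.intersperse [1, 1] (rest.drop j)).flatten).tail := by
      intro j
      simp [List.take_succ_cons, List.append_assoc]
    simp only [reidx]
    set m := μ ++ (rest.map (fun μ => [1, 1] ++ μ)).flatten with hmdef
    have hm : m ≠ [] := by simp [hmdef, hμ]
    have step := contN_step p m hp hm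
    have e0 : (List.intersperse [1, 1] (μ :: rest)).flatten = m := flatten_intersperse _ _ _
    have e2 : p ++ ((μ :: rest).map (fun μ => [2] ++ μ)).flatten
        = p ++ ([2] ++ μ) ++ (rest.map (fun μ => [2] ++ μ)).flatten := by
      simp [List.append_assoc]
    have e11 : p ++ ((μ :: rest).map (fun μ => [1, 1] ++ μ)).flatten
        = p ++ [1, 1] ++ m := by
      simp [hmdef, List.append_assoc]
    have e2' : p ++ [2] ++ m = p ++ ([2] ++ μ) ++ (rest.map (fun μ => [1, 1] ++ μ)).flatten := by
      simp [hmdef, List.append_assoc]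
    rw [e2, e11, step, e2']
    simp only [List.take_zero, List.map_nil, List.flatten_nil, List.append_nil, List.drop_zero, e0]
    linarith [key]

theorem stmt_15 (μs : List (List ℕ)) (hk : 2 ≤ μs.length)
    (hok : ∀ μ ∈ μs, OkSeq μ) :
    contN ((List.intersperse [2] μs).flatten ++ [2]) +
      ∑ j ∈ Finset.Ico 1 μs.length,
        contN ((List.intersperse [2] (μs.take j)).flatten).dropLast *
          contN ((List.intersperse [1, 1] (μs.drop j)).flatten).tail =
    contN ((List.intersperse [2] μs).flatten ++ [1]) +
      contN (List.intersperse [1, 1] μs).flatten := by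
  show contN ((List.intersperse [2] μs).flatten ++ [2]) +
      ∑ j ∈ Finset.Ico 1 μs.length,
        contN ((List.intersperse [2] (μs.take j)).flatten).dropLast *
          contN ((List.intersperse [1, 1] (μs.drop j)).flatten).tail =
    contN ((List.intersperse [2] μs).flatten ++ [1]) +
      contN (List.intersperse [1, 1] μs).flatten
  have hne : ∀ μ ∈ μs, μ ≠ [] := by
    intro μ hμ
    rcases hok μ hμ with ⟨h, _⟩ | h
    · exact h
    · simp [h]
  obtain ⟨μ, rest, rfl⟩ : ∃ b L, μs = b :: L := List.exists_cons_of_ne_nil (by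
    intro h; simp [h] at hk)
  have hμ : μ ≠ [] := hne μ (by simp)
  have hrest : ∀ ν ∈ rest, ν ≠ [] := fun ν hν => hne ν (by simp [hν])
  have key := main_aux rest hrest μ hμ
  have eD : (List.intersperse [2] (μ :: rest)).flatten
      = μ ++ (rest.map (fun μ => [2] ++ μ)).flatten := flatten_intersperse _ _ _
  have eF : (List.intersperse [1, 1] (μ :: rest)).flatten
      = μ ++ (rest.map (fun μ => [1, 1] ++ μ)).flatten := flatten_intersperse _ _ _
  set D := μ ++ (rest.map (fun μ => [2] ++ μ)).flatten with hD
  have hDne : D ≠ [] := by simp [hD, hμ]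
  have a2 : contN (D ++ [2]) = 2 * contN D + contN D.dropLast := by
    rw [contN_split D [2] hDne (by simp)]
    simp [contN, contAux]; ring
  have a1 : contN (D ++ [1]) = contN D + contN D.dropLast := by
    rw [contN_split D [1] hDne (by simp)]
    simp [contN, contAux]
  rw [List.length_cons, Finset.sum_Ico_eq_sum_range]
  have reidx : ∀ j : ℕ,
      contN ((List.intersperse [2] ((μ :: rest).take (1 + j))).flatten).dropLast *
        contN ((List.intersperse [1, 1] ((μ :: rest).drop (1 + j))).flatten).tail
      = contN (μ ++ ((rest.take j).map (fun μ => [2] ++ μ)).flatten).dropLast *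
        contN ((List.intersperse [1, 1] (rest.drop j)).flatten).tail := by
    intro j
    rw [show 1 + j = j + 1 by omega, List.take_succ_cons, List.drop_succ_cons,
      flatten_intersperse]
  simp only [reidx, Nat.add_sub_cancel, eD, eF, ← hD]
  rw [a1, a2]
  linarith [key]
end

section
/- For k a positive integer with k ≠ 1 and k ≠ 3, the Diophantine equation x² + y² + z² = kxyz has no solution in positive integers. -/
lemma odd_sq_mod4 (x : ℕ) (h : x % 2 = 1) : x ^ 2 % 4 = 1 := by
  obtain ⟨c, rfl⟩ : ∃ c, x = 2 * c + 1 := ⟨x / 2, by omega⟩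
  have h2 : (2 * c + 1) ^ 2 = 1 + 4 * (c * c + c) := by ring
  rw [h2, Nat.add_mul_mod_self_left]

lemma even_sq_mod4 (x : ℕ) (h : x % 2 = 0) : x ^ 2 % 4 = 0 := by
  obtain ⟨c, rfl⟩ : ∃ c, x = 2 * c := ⟨x / 2, by omega⟩
  have h2 : (2 * c) ^ 2 = 4 * (c * c) := by ring
  rw [h2]
  exact Nat.mul_mod_right 4 _

lemma aux2 (k : ℕ) (hk : 2 ≤ k) (h3 : k ≠ 3) :
    ∀ n x y : ℕ, x + y ≤ n → 0 < x → 0 < y → y ≤ x → x ^ 2 + y ^ 2 + 1 ≠ k * x * y := by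
  intro n
  induction n with
  | zero => intro x y h hx hy _ _; omega
  | succ n ih =>
    intro x y hle hx hy hyx heq
    rcases eq_or_lt_of_le hyx with heq2 | hlt
    · subst heq2
      have h1 : y ^ 2 ∣ k * y * y := ⟨k, by ring⟩
      have h2 : y ^ 2 ∣ y ^ 2 + y ^ 2 := ⟨2, by ring⟩
      rw [← heq] at h1
      have hdvd : y ^ 2 ∣ 1 := (Nat.dvd_add_right h2).mp h1
      have hle1 : y ^ 2 ≤ 1 := Nat.le_of_dvd one_pos hdvd
      have hy1 : y = 1 := by nlinarith
      subst hy1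
      norm_num at heq
      exact h3 heq.symm
    · -- y < x, jump
      have h0 : x * x < x * (k * y) := by nlinarith [heq]
      have hxky : x < k * y := Nat.lt_of_mul_lt_mul_left h0
      obtain ⟨w, hwx⟩ : ∃ w, w + x = k * y := ⟨k * y - x, by omega⟩
      have e0 : w * x + x * x = (k * y) * x := by rw [← hwx]; ring
      have e0' : (k * y) * x = k * x * y := by ring
      have hxx : x * x = x ^ 2 := by ring
      have hprod : w * x = y ^ 2 + 1 := by linarith
      have hw : 0 < w := by
        rcases Nat.eq_zero_or_pos w with hz | h
        · rw [hz, zero_mul] at hprod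
          have : 0 < y ^ 2 + 1 := by positivity
          linarith
        · exact h
      have h5 : w * x < x * x := by nlinarith
      have hwlt : w < x := Nat.lt_of_mul_lt_mul_right h5
      have e2 : w ^ 2 + w * x = w * (k * y) := by rw [← hwx]; ring
      have e2' : w * (k * y) = k * w * y := by ring
      have heq' : w ^ 2 + y ^ 2 + 1 = k * w * y := by linarith
      rcases le_total y w with h6 | h6
      · exact ih w y (by omega) hw hy h6 heq'
      · refine ih y w (by omega) hy hw h6 ?_
        have : k * y * w = k * w * y := by ring
        linarith

set_option maxHeartbeats 1600000 in
lemma trip (k : ℕ) (hk : 2 ≤ k) (h3 : k ≠ 3) :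
    ∀ n x y z : ℕ, x + y + z ≤ n → 0 < z → z ≤ y → y ≤ x →
      x ^ 2 + y ^ 2 + z ^ 2 ≠ k * x * y * z := by
  intro n
  induction n with
  | zero => intro x y z h hz _ _ _; omega
  | succ n ih =>
    intro x y z hle hz hzy hyx heq
    have hy : 0 < y := lt_of_lt_of_le hz hzy
    have hx : 0 < x := lt_of_lt_of_le hy hyx
    have h0 : x * x < x * (k * y * z) := by nlinarith [heq]
    have hxky : x < k * y * z := Nat.lt_of_mul_lt_mul_left h0
    obtain ⟨w, hwx⟩ : ∃ w, w + x = k * y * z := ⟨k * y * z - x, by omega⟩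
    have e0 : w * x + x * x = (k * y * z) * x := by rw [← hwx]; ring
    have e0' : (k * y * z) * x = k * x * y * z := by ring
    have hxx : x * x = x ^ 2 := by ring
    have hprod : w * x = y ^ 2 + z ^ 2 := by linarith
    have hw : 0 < w := by
      rcases Nat.eq_zero_or_pos w with hz0 | h
      · rw [hz0, zero_mul] at hprod
        have : 0 < y ^ 2 + z ^ 2 := by positivity
        linarith
      · exact h
    have e2 : w ^ 2 + w * x = w * (k * y * z) := by rw [← hwx]; ring
    have e2' : w * (k * y * z) = k * w * y * z := by ring
    have heq' : w ^ 2 + y ^ 2 + z ^ 2 = k * w * y * z := by linarith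
    rcases lt_or_ge w x with hwlt | hwge
    · -- descent
      rcases le_total y w with h6 | h6
      · exact ih w y z (by omega) hz hzy h6 heq'
      · rcases le_total z w with h7 | h7
        · refine ih y w z (by omega) hz h7 h6 ?_
          have : k * y * w * z = k * w * y * z := by ring
          linarith
        · refine ih y z w (by omega) hw h7 hzy ?_
          have : k * y * z * w = k * w * y * z := by ring
          linarith
    · -- w ≥ x : then k*z ≤ 4
      have h4 : x ^ 2 ≤ y ^ 2 + z ^ 2 := by
        have : x * x ≤ w * x := Nat.mul_le_mul_right x hwge
        linarith
      have hz2y2 : z ^ 2 ≤ y ^ 2 := Nat.pow_le_pow_left hzy 2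
      have hy2x2 : y ^ 2 ≤ x ^ 2 := Nat.pow_le_pow_left hyx 2
      have hkz4 : k * z ≤ 4 := by
        have hb : k * x * y * z ≤ 4 * y ^ 2 := by linarith
        have e5 : (k * z) * (x * y) = k * x * y * z := by ring
        have e6 : y ^ 2 ≤ x * y := by
          have := Nat.mul_le_mul_right y hyx
          nlinarith
        have hb2 : (k * z) * (x * y) ≤ 4 * (x * y) := by linarith
        exact Nat.le_of_mul_le_mul_right hb2 (Nat.mul_pos hx hy)
      have hz12 : z = 1 ∨ z = 2 := by
        rcases Nat.lt_or_ge z 3 with h | h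
        · omega
        · exfalso
          have h6 : 2 * 3 ≤ k * z := Nat.mul_le_mul hk h
          linarith
      rcases hz12 with rfl | rfl
      · -- z = 1
        have hone : x ^ 2 + y ^ 2 + 1 = k * x * y := by
          have e3 : k * x * y * 1 = k * x * y := by ring
          have e4 : (1 : ℕ) ^ 2 = 1 := by norm_num
          linarith
        exact aux2 k hk h3 (x + y) x y le_rfl hx hy hyx hone
      · -- z = 2, so k = 2
        have hk2 : k = 2 := by omega
        subst hk2
        have h' : x ^ 2 + y ^ 2 + 4 = 4 * (x * y) := by
          have e3 : 2 * x * y * 2 = 4 * (x * y) := by ring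
          have e4 : (2 : ℕ) ^ 2 = 4 := by norm_num
          linarith
        have hm : (x ^ 2 + y ^ 2 + 4) % 4 = 0 := by
          rw [h']; exact Nat.mul_mod_right 4 _
        have hxe : x % 2 = 0 := by
          rcases Nat.mod_two_eq_zero_or_one x with hx2 | hx2
          · exact hx2
          · exfalso
            rcases Nat.mod_two_eq_zero_or_one y with hy2 | hy2
            · have a1 := odd_sq_mod4 x hx2
              have a2 := even_sq_mod4 y hy2
              omega
            · have a1 := odd_sq_mod4 x hx2
              have a2 := odd_sq_mod4 y hy2
              omega
        have hye : y % 2 = 0 := by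
          rcases Nat.mod_two_eq_zero_or_one y with hy2 | hy2
          · exact hy2
          · exfalso
            have a1 := even_sq_mod4 x hxe
            have a2 := odd_sq_mod4 y hy2
            omega
        obtain ⟨c, rfl⟩ : ∃ c, x = 2 * c := ⟨x / 2, by omega⟩
        obtain ⟨d, rfl⟩ : ∃ d, y = 2 * d := ⟨y / 2, by omega⟩
        have hc : 0 < c := by omega
        have hd : 0 < d := by omega
        have hcd : d ≤ c := by omega
        have e7 : (2 * c) ^ 2 + (2 * d) ^ 2 + 4 = 4 * (c ^ 2 + d ^ 2 + 1) := by ring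
        have e8 : 4 * ((2 * c) * (2 * d)) = 4 * (4 * c * d) := by ring
        have e9 : 4 * (c ^ 2 + d ^ 2 + 1) = 4 * (4 * c * d) := by linarith
        have hfinal : c ^ 2 + d ^ 2 + 1 = 4 * c * d :=
          Nat.eq_of_mul_eq_mul_left (by norm_num) e9
        exact aux2 4 (by norm_num) (by norm_num) (c + d) c d le_rfl hc hd hcd hfinal

theorem stmt_18 (k : ℕ) (hk : 0 < k) (h1 : k ≠ 1) (h3 : k ≠ 3) :
    ¬ ∃ x y z : ℕ, 0 < x ∧ 0 < y ∧ 0 < z ∧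
      x ^ 2 + y ^ 2 + z ^ 2 = k * x * y * z := by
  rintro ⟨x, y, z, hx, hy, hz, heq⟩
  have hk2 : 2 ≤ k := by omega
  rcases le_total x y with h1' | h1' <;> rcases le_total y z with h2' | h2'
  · exact trip k hk2 h3 (x + y + z) z y x (by omega) hx h1' h2'
      (by rw [show k * z * y * x = k * x * y * z from by ring]; linarith)
  · rcases le_total x z with h3' | h3'
    · exact trip k hk2 h3 (x + y + z) y z x (by omega) hx h3' h2'
        (by rw [show k * y * z * x = k * x * y * z from by ring]; linarith)
    · exact trip k hk2 h3 (x + y + z) y x z (by omega) hz h3' h1'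
        (by rw [show k * y * x * z = k * x * y * z from by ring]; linarith)
  · rcases le_total x z with h3' | h3'
    · exact trip k hk2 h3 (x + y + z) z x y (by omega) hy h1' h3'
        (by rw [show k * z * x * y = k * x * y * z from by ring]; linarith)
    · exact trip k hk2 h3 (x + y + z) x z y (by omega) hy h2' h3'
        (by rw [show k * x * z * y = k * x * y * z from by ring]; linarith)
  · exact trip k hk2 h3 (x + y + z) x y z (by omega) hz h2' h1' heq
end

section
/- If (x,y,z) is a positive integer solution of x² + y² + z² = xyz, then each of x, y, z is divisible by 3, and (x/3, y/3, z/3) is a solution of the Markov equation a² + b² + c² = 3abc. -/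
theorem stmt_19 (x y z : ℕ) (hx : 0 < x) (hy : 0 < y) (hz : 0 < z)
    (h : x ^ 2 + y ^ 2 + z ^ 2 = x * y * z) :
    3 ∣ x ∧ 3 ∣ y ∧ 3 ∣ z ∧
    (x / 3) ^ 2 + (y / 3) ^ 2 + (z / 3) ^ 2 =
      3 * (x / 3) * (y / 3) * (z / 3) := by
  have key : ∀ a b c : ZMod 3, a ^ 2 + b ^ 2 + c ^ 2 = a * b * c → a = 0 ∧ b = 0 ∧ c = 0 := by
    decide
  have h3 : ((x : ZMod 3)) ^ 2 + (y : ZMod 3) ^ 2 + (z : ZMod 3) ^ 2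
      = (x : ZMod 3) * y * z := by exact_mod_cast congrArg (Nat.cast : ℕ → ZMod 3) h
  obtain ⟨ha, hb, hc⟩ := key _ _ _ h3
  have dx : 3 ∣ x := (ZMod.natCast_eq_zero_iff x 3).mp ha
  have dy : 3 ∣ y := (ZMod.natCast_eq_zero_iff y 3).mp hb
  have dz : 3 ∣ z := (ZMod.natCast_eq_zero_iff z 3).mp hc
  obtain ⟨a, rfl⟩ := dx
  obtain ⟨b, rfl⟩ := dy
  obtain ⟨c, rfl⟩ := dz
  refine ⟨⟨a, rfl⟩, ⟨b, rfl⟩, ⟨c, rfl⟩, ?_⟩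
  have h9 : 9 * (a ^ 2 + b ^ 2 + c ^ 2) = 9 * (3 * a * b * c) := by ring_nf; ring_nf at h; omega
  simp only [Nat.mul_div_cancel_left _ (by norm_num : 0 < 3)]
  omega
end
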